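/- (Proposition 1, full stacked architecture, attention-based case) Let N, d, d_g, d_w : ℕ, let Θ (for layer 0) and Θ' (for layer 1) each consist of three matrices in Matrix (Fin d_g) (Fin d) ℝ and Matrix (Fin d_g) (Fin d_g) ℝ respectively, and let W : Matrix (Fin d_w) (Fin d_g) ℝ. Define the two-layer cross-set transformation by X₁ := g_att(X₀, Y₀ | Θ), Y₁ := g_att(Y₀, X₀ | Θ), X₂ := g_att(X₁, Y₁ | Θ'), Y₂ := g_att(Y₁, X₁ | Θ'), where the same weights are shared within each layer. Then the resulting matching score F(X₀, Y₀) := CS(X₂, Y₂ | W) is symmetric: F(X₀, Y₀) = F(Y₀, X₀) for all X₀, Y₀ : Fin N → (Fin d → ℝ); and it is permutation invariant: F(X₀ ∘ π, Y₀ ∘ σ) = F(X₀, Y₀) for all permutations π, σ of Fin N (allowing X₀ : Fin N → (Fin d → ℝ), Y₀ : Fin M → (Fin d → ℝ) with π : Equiv.Perm (Fin N), σ : Equiv.Perm (Fin M) for the invariance part). -/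
import Mathlib


open Matrix

/-- The cross-similarity of two tuples of feature vectors. -/
noncomputable def CS {N M d dw : ℕ} (W : Matrix (Fin dw) (Fin d) ℝ)
    (X : Fin N → Fin d → ℝ) (Y : Fin M → Fin d → ℝ) : ℝ :=
  (1 / ((N : ℝ) * M)) * ∑ n : Fin N, ∑ m : Fin M,
    max 0 ((W.mulVec (X n) ⬝ᵥ W.mulVec (Y m)) / Real.sqrt dw)

/-- The attention-based cross-set map (input dimension e, output dimension dg). -/
noncomputable def gAtt {N M e dg : ℕ} (Θ₁ Θ₂ Θ₃ : Matrix (Fin dg) (Fin e) ℝ)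
    (X : Fin N → Fin e → ℝ) (Y : Fin M → Fin e → ℝ) : Fin N → Fin dg → ℝ :=
  fun n => (1 / (M : ℝ)) • ∑ m : Fin M,
    max 0 ((Θ₁.mulVec (X n) ⬝ᵥ Θ₂.mulVec (Y m)) / Real.sqrt dg) • Θ₃.mulVec (Y m)


lemma CS_symm {N M d dw : ℕ} (W : Matrix (Fin dw) (Fin d) ℝ)
    (X : Fin N → Fin d → ℝ) (Y : Fin M → Fin d → ℝ) :
    CS W X Y = CS W Y X := by
  unfold CS
  rw [Finset.sum_comm, mul_comm (N:ℝ)]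
  congr 1
  refine Finset.sum_congr rfl fun m _ => Finset.sum_congr rfl fun n _ => ?_
  rw [dotProduct_comm]

lemma gAtt_perm {N M e dg : ℕ} (Θ₁ Θ₂ Θ₃ : Matrix (Fin dg) (Fin e) ℝ)
    (X : Fin N → Fin e → ℝ) (Y : Fin M → Fin e → ℝ)
    (π : Equiv.Perm (Fin N)) (σ : Equiv.Perm (Fin M)) :
    gAtt Θ₁ Θ₂ Θ₃ (X ∘ π) (Y ∘ σ) = (gAtt Θ₁ Θ₂ Θ₃ X Y) ∘ π := by
  funext n
  unfold gAtt
  simp only [Function.comp_apply]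
  congr 1
  exact Equiv.sum_comp σ (fun m => max 0 ((Θ₁.mulVec (X (π n)) ⬝ᵥ Θ₂.mulVec (Y m)) / Real.sqrt dg) • Θ₃.mulVec (Y m))

lemma CS_perm {N M d dw : ℕ} (W : Matrix (Fin dw) (Fin d) ℝ)
    (X : Fin N → Fin d → ℝ) (Y : Fin M → Fin d → ℝ)
    (π : Equiv.Perm (Fin N)) (σ : Equiv.Perm (Fin M)) :
    CS W (X ∘ π) (Y ∘ σ) = CS W X Y := by
  unfold CS
  congr 1
  rw [← Equiv.sum_comp π (fun n => ∑ m : Fin M, max 0 ((W.mulVec (X n) ⬝ᵥ W.mulVec (Y m)) / Real.sqrt dw))]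
  refine Finset.sum_congr rfl fun n _ => ?_
  exact Equiv.sum_comp σ (fun m => max 0 ((W.mulVec (X (π n)) ⬝ᵥ W.mulVec (Y m)) / Real.sqrt dw))

/-- The full two-layer stacked attention-based cross-set architecture, with
weights shared within each layer, composed with CS, is symmetric (taking
M = N) and permutation invariant. -/
theorem stacked_CS_gAtt_symm_and_perm_invariant (N M d dg dw : ℕ)
    (Θ₁ Θ₂ Θ₃ : Matrix (Fin dg) (Fin d) ℝ)
    (Θ'₁ Θ'₂ Θ'₃ : Matrix (Fin dg) (Fin dg) ℝ)
    (W : Matrix (Fin dw) (Fin dg) ℝ) :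
    (∀ X₀ Y₀ : Fin N → Fin d → ℝ,
      CS W (gAtt Θ'₁ Θ'₂ Θ'₃ (gAtt Θ₁ Θ₂ Θ₃ X₀ Y₀) (gAtt Θ₁ Θ₂ Θ₃ Y₀ X₀))
           (gAtt Θ'₁ Θ'₂ Θ'₃ (gAtt Θ₁ Θ₂ Θ₃ Y₀ X₀) (gAtt Θ₁ Θ₂ Θ₃ X₀ Y₀))
      = CS W (gAtt Θ'₁ Θ'₂ Θ'₃ (gAtt Θ₁ Θ₂ Θ₃ Y₀ X₀) (gAtt Θ₁ Θ₂ Θ₃ X₀ Y₀))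
             (gAtt Θ'₁ Θ'₂ Θ'₃ (gAtt Θ₁ Θ₂ Θ₃ X₀ Y₀) (gAtt Θ₁ Θ₂ Θ₃ Y₀ X₀))) ∧
    (∀ (X₀ : Fin N → Fin d → ℝ) (Y₀ : Fin M → Fin d → ℝ)
      (π : Equiv.Perm (Fin N)) (σ : Equiv.Perm (Fin M)),
      CS W (gAtt Θ'₁ Θ'₂ Θ'₃ (gAtt Θ₁ Θ₂ Θ₃ (X₀ ∘ π) (Y₀ ∘ σ)) (gAtt Θ₁ Θ₂ Θ₃ (Y₀ ∘ σ) (X₀ ∘ π)))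
           (gAtt Θ'₁ Θ'₂ Θ'₃ (gAtt Θ₁ Θ₂ Θ₃ (Y₀ ∘ σ) (X₀ ∘ π)) (gAtt Θ₁ Θ₂ Θ₃ (X₀ ∘ π) (Y₀ ∘ σ)))
      = CS W (gAtt Θ'₁ Θ'₂ Θ'₃ (gAtt Θ₁ Θ₂ Θ₃ X₀ Y₀) (gAtt Θ₁ Θ₂ Θ₃ Y₀ X₀))
             (gAtt Θ'₁ Θ'₂ Θ'₃ (gAtt Θ₁ Θ₂ Θ₃ Y₀ X₀) (gAtt Θ₁ Θ₂ Θ₃ X₀ Y₀))) := by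
  constructor
  · intro X₀ Y₀
    exact CS_symm ..
  · intro X₀ Y₀ π σ
    rw [gAtt_perm, gAtt_perm, gAtt_perm, gAtt_perm, CS_perm]
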